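/- Define k̃_ℓ(x,p,N) = C(N,ℓ)(p/q)^ℓ k_ℓ(x,p,N). For p ∈ (0,1), q = 1-p, 0 ≤ n ≤ N-1 and all real x ∈ [0,N]: Σ_{ℓ=1}^n (2ℓ/N - 1){k̃_ℓ(x,p,N)}² + ((q-p)/q²)(1 - x/N) Σ_{ℓ=0}^{n-1} {k̃_ℓ(x,p,N-1)}² + (1 - x/N){k̃_n(x,p,N-1)}² = 1 - (x/N){k̃_n(x-1,p,N-1)}². -/

import Mathlib

open Finset

noncomputable def poch (a : ℝ) (k : ℕ) : ℝ := ∏ i ∈ Finset.range k, (a + i)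

noncomputable def hahnQ (n : ℕ) (x α β : ℝ) (N : ℕ) : ℝ :=
  ∑ k ∈ Finset.range (n + 1),
    poch (-(n : ℝ)) k * poch ((n : ℝ) + α + β + 1) k * poch (-x) k /
      ((Nat.factorial k : ℝ) * poch (α + 1) k * poch (-(N : ℝ)) k)

noncomputable def binomR (a b : ℝ) : ℝ :=
  Real.Gamma (a + 1) / (Real.Gamma (b + 1) * Real.Gamma (a - b + 1))

noncomputable def hahnWeight (x : ℕ) (α β : ℝ) (N : ℕ) : ℝ :=
  binomR ((x : ℝ) + α) (x : ℝ) * binomR ((N : ℝ) - x + β) ((N : ℝ) - x) /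
    binomR ((N : ℝ) + α + β + 1) (N : ℝ)

noncomputable def hahnPi (n : ℕ) (α β : ℝ) (N : ℕ) : ℝ :=
  ((-1 : ℝ) ^ n * poch (-(N : ℝ)) n * poch (α + 1) n * poch (α + β + 1) n) /
      ((Nat.factorial n : ℝ) * poch ((N : ℝ) + α + β + 2) n * poch (β + 1) n) *
    ((2 * (n : ℝ) + α + β + 1) / (α + β + 1))

noncomputable def kraw (n : ℕ) (x p : ℝ) (N : ℕ) : ℝ :=
  ∑ k ∈ Finset.range (n + 1),
    poch (-(n : ℝ)) k * poch (-x) k / ((Nat.factorial k : ℝ) * poch (-(N : ℝ)) k) * (1 / p) ^ k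

noncomputable def dualR (n : ℕ) (lam α β : ℝ) (N : ℕ) : ℝ :=
  ∑ k ∈ Finset.range (n + 1),
    poch (-(n : ℝ)) k * (∏ i ∈ Finset.range k, ((i : ℝ) * (α + β + 1 + i) - lam)) /
      ((Nat.factorial k : ℝ) * poch (α + 1) k * poch (-(N : ℝ)) k)

noncomputable def ktil (l : ℕ) (x p : ℝ) (N : ℕ) : ℝ :=
  (N.choose l : ℝ) * (p / (1 - p)) ^ l * kraw l x p N

lemma poch_zero (a : ℝ) : poch a 0 = 1 := by simp [poch]

lemma poch_succ (a : ℝ) (k : ℕ) : poch a (k+1) = poch a k * (a + k) := by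
  simp [poch, Finset.prod_range_succ]

lemma poch_neg_nat (M k : ℕ) : poch (-(M:ℝ)) k = (-1)^k * (M.descFactorial k : ℝ) := by
  induction k with
  | zero => simp [poch]
  | succ k ih =>
    rw [poch_succ, ih, Nat.descFactorial_succ]
    rcases le_or_gt k M with h | h
    · push_cast [Nat.cast_sub h]
      ring
    · have h0 : M.descFactorial k = 0 := Nat.descFactorial_eq_zero_iff_lt.mpr h
      simp [h0]

lemma descFactorial_ne_zero {M k : ℕ} (h : k ≤ M) : (M.descFactorial k : ℝ) ≠ 0 := by
  have : M.descFactorial k ≠ 0 := by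
    rw [Ne, Nat.descFactorial_eq_zero_iff_lt]; omega
  exact_mod_cast Nat.cast_ne_zero.mpr this

lemma poch_neg_nat_ne_zero {M k : ℕ} (h : k ≤ M) : poch (-(M:ℝ)) k ≠ 0 := by
  rw [poch_neg_nat]
  exact mul_ne_zero (pow_ne_zero _ (by norm_num)) (descFactorial_ne_zero h)

lemma nat_key (M : ℕ) : ∀ k j : ℕ, k ≤ j → j ≤ M →
    M.choose j * j.descFactorial k = (M-k).choose (j-k) * M.descFactorial k := by
  intro k
  induction k with
  | zero => intro j _ _; simp
  | succ k ih =>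
    intro j hkj hjM
    have ih' := ih j (by omega) hjM
    rw [Nat.descFactorial_succ, Nat.descFactorial_succ]
    have key : (j - k) * ((M-k).choose (j-k)) = (M - k) * ((M-k-1).choose (j-k-1)) := by
      obtain ⟨a, ha⟩ : ∃ a, j - k = a + 1 := ⟨j - k - 1, by omega⟩
      obtain ⟨b, hb⟩ : ∃ b, M - k = b + 1 := ⟨M - k - 1, by omega⟩
      rw [ha, hb]
      simp only [Nat.add_sub_cancel]
      have h3 := Nat.add_one_mul_choose_eq b a
      rw [h3]; ring
    have e1 : M - (k+1) = M - k - 1 := by omega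
    have e2 : j - (k+1) = j - k - 1 := by omega
    rw [e1, e2]
    calc M.choose j * ((j - k) * j.descFactorial k)
        = (j - k) * (M.choose j * j.descFactorial k) := by ring
      _ = (j - k) * ((M-k).choose (j-k) * M.descFactorial k) := by rw [ih']
      _ = ((j - k) * ((M-k).choose (j-k))) * M.descFactorial k := by ring
      _ = ((M - k) * ((M-k-1).choose (j-k-1))) * M.descFactorial k := by rw [key]
      _ = (M-k-1).choose (j-k-1) * ((M - k) * M.descFactorial k) := by ring

noncomputable def KT (j : ℕ) (y p : ℝ) (M : ℕ) : ℝ :=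
  ∑ k ∈ Finset.range (j+1),
    ((M-k).choose (j-k) : ℝ) * (p/(1-p))^j * (1/p)^k / (k.factorial : ℝ) * poch (-y) k

lemma ktil_eq_KT {p : ℝ} (hp : p ≠ 0) (hq : (1:ℝ) - p ≠ 0) {j M : ℕ} (hjM : j ≤ M) (y : ℝ) :
    ktil j y p M = KT j y p M := by
  unfold ktil kraw KT
  rw [mul_assoc, Finset.mul_sum, Finset.mul_sum]
  refine Finset.sum_congr rfl ?_
  intro k hk
  have hk' : k ≤ j := by simpa [Nat.lt_succ_iff] using hk
  rw [poch_neg_nat M k, poch_neg_nat j k]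
  have h1 : (M.descFactorial k : ℝ) ≠ 0 := descFactorial_ne_zero (le_trans hk' hjM)
  have h2 : ((k.factorial : ℝ)) ≠ 0 := by exact_mod_cast Nat.factorial_ne_zero k
  have h3 : ((-1:ℝ))^k ≠ 0 := pow_ne_zero _ (by norm_num)
  have keyN := nat_key M k j hk' hjM
  have key : (M.choose j : ℝ) * (j.descFactorial k : ℝ)
      = ((M-k).choose (j-k) : ℝ) * (M.descFactorial k : ℝ) := by exact_mod_cast keyN
  field_simp
  linear_combination (poch (-y) k) * key

lemma KT_zero (y p : ℝ) (M : ℕ) : KT 0 y p M = 1 := by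
  simp [KT, poch]

lemma KT_one {p : ℝ} (hp : p ≠ 0) (y : ℝ) (M : ℕ) :
    KT 1 y p M = (M:ℝ) * (p/(1-p)) - y / (1-p) := by
  rcases eq_or_ne ((1:ℝ) - p) 0 with h | h
  · simp [KT, Finset.sum_range_succ, poch, h, div_zero]
  · simp only [KT, Finset.sum_range_succ, Finset.sum_range_zero, poch_zero, poch_succ]
    simp [Nat.choose_one_right]
    field_simp
    ring

lemma poch_neg_succ (y : ℝ) (k : ℕ) : poch (-y) (k+1) = (-y) * poch (-(y-1)) k := by
  unfold poch
  rw [Finset.prod_range_succ']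
  rw [mul_comm]
  congr 1
  · norm_num
  · refine Finset.prod_congr rfl fun i _ => ?_
    push_cast
    ring

lemma poch_shift (y : ℝ) : ∀ k : ℕ, poch (-y) k = poch (-(y-1)) k - (k:ℝ) * poch (-(y-1)) (k-1)
  | 0 => by simp [poch]
  | (k+1) => by
    rw [poch_neg_succ]
    simp only [Nat.add_sub_cancel]
    rw [poch_succ]
    push_cast
    ring

lemma poch_mul_y (y : ℝ) (k : ℕ) : y * poch (-y) k = (k:ℝ) * poch (-y) k - poch (-y) (k+1) := by
  rw [poch_succ]; ring

lemma BKT {p : ℝ} (l M : ℕ) (hlM : l ≤ M) (x : ℝ) :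
    KT (l+1) x p (M+1) = KT (l+1) x p M + (p/(1-p)) * KT l x p M := by
  unfold KT
  rw [Finset.mul_sum, Finset.sum_range_succ, Finset.sum_range_succ
    (f := fun k => ((M-k).choose (l+1-k) : ℝ) * (p/(1-p))^(l+1) * (1/p)^k / (k.factorial : ℝ) * poch (-x) k)]
  have htop : ((M+1-(l+1)).choose (l+1-(l+1)) : ℝ) * (p/(1-p))^(l+1) * (1/p)^(l+1) / ((l+1).factorial : ℝ) * poch (-x) (l+1)
      = ((M-(l+1)).choose (l+1-(l+1)) : ℝ) * (p/(1-p))^(l+1) * (1/p)^(l+1) / ((l+1).factorial : ℝ) * poch (-x) (l+1) := by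
    simp [Nat.sub_self]
  rw [htop]
  have hmain : ∀ k ∈ Finset.range (l+1),
      ((M+1-k).choose (l+1-k) : ℝ) * (p/(1-p))^(l+1) * (1/p)^k / (k.factorial : ℝ) * poch (-x) k
      = ((M-k).choose (l+1-k) : ℝ) * (p/(1-p))^(l+1) * (1/p)^k / (k.factorial : ℝ) * poch (-x) k
        + (p/(1-p)) * (((M-k).choose (l-k) : ℝ) * (p/(1-p))^l * (1/p)^k / (k.factorial : ℝ) * poch (-x) k) := by
    intro k hk
    have hkl : k ≤ l := by simpa [Nat.lt_succ_iff] using hk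
    have hpas : (M+1-k).choose (l+1-k) = (M-k).choose (l+1-k) + (M-k).choose (l-k) := by
      rw [show M+1-k = (M-k)+1 by omega, show l+1-k = (l-k)+1 by omega, Nat.choose_succ_succ]
      simp only [Nat.succ_eq_add_one]
      omega
    rw [hpas]
    push_cast
    ring
  rw [Finset.sum_congr rfl hmain, Finset.sum_add_distrib]
  ring

lemma DKT {p : ℝ} (hp : p ≠ 0) (hq : (1:ℝ) - p ≠ 0) (l M : ℕ) (hlM : l ≤ M) (x : ℝ) :
    KT (l+1) x p (M+1) = KT (l+1) (x-1) p M - KT l (x-1) p M := by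
  unfold KT
  have step1 : (∑ k ∈ Finset.range (l+2),
      ((M+1-k).choose (l+1-k) : ℝ) * (p/(1-p))^(l+1) * (1/p)^k / (k.factorial : ℝ) * poch (-x) k)
      = (∑ k ∈ Finset.range (l+2),
          ((M+1-k).choose (l+1-k) : ℝ) * (p/(1-p))^(l+1) * (1/p)^k / (k.factorial : ℝ) * poch (-(x-1)) k)
        - ∑ k ∈ Finset.range (l+2),
          ((M+1-k).choose (l+1-k) : ℝ) * (p/(1-p))^(l+1) * (1/p)^k / (k.factorial : ℝ) * ((k:ℝ) * poch (-(x-1)) (k-1)) := by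
    rw [← Finset.sum_sub_distrib]
    refine Finset.sum_congr rfl fun k _ => ?_
    rw [poch_shift x k]
    ring
  rw [step1]
  have step2 : (∑ k ∈ Finset.range (l+2),
      ((M+1-k).choose (l+1-k) : ℝ) * (p/(1-p))^(l+1) * (1/p)^k / (k.factorial : ℝ) * ((k:ℝ) * poch (-(x-1)) (k-1)))
      = ∑ k ∈ Finset.range (l+1),
        ((M-k).choose (l-k) : ℝ) * (p/(1-p))^(l+1) * (1/p)^(k+1) / (k.factorial : ℝ) * poch (-(x-1)) k := by
    rw [Finset.sum_range_succ']
    simp only [Nat.cast_zero, Nat.cast_add, Nat.cast_one, Nat.add_sub_cancel, mul_zero, zero_mul, add_zero]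
    refine Finset.sum_congr rfl fun k hk => ?_
    have hkl : k ≤ l := by simpa [Nat.lt_succ_iff] using hk
    have h1 : M+1-(k+1) = M - k := by omega
    have h2 : l+1-(k+1) = l - k := by omega
    rw [h1, h2, Nat.factorial_succ]
    push_cast
    field_simp
  rw [step2]
  rw [Finset.sum_range_succ, Finset.sum_range_succ
    (f := fun k => ((M-k).choose (l+1-k) : ℝ) * (p/(1-p))^(l+1) * (1/p)^k / (k.factorial : ℝ) * poch (-(x-1)) k)]
  have htop : ((M+1-(l+1)).choose (l+1-(l+1)) : ℝ) * (p/(1-p))^(l+1) * (1/p)^(l+1) / ((l+1).factorial : ℝ) * poch (-(x-1)) (l+1)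
      = ((M-(l+1)).choose (l+1-(l+1)) : ℝ) * (p/(1-p))^(l+1) * (1/p)^(l+1) / ((l+1).factorial : ℝ) * poch (-(x-1)) (l+1) := by
    simp [Nat.sub_self]
  rw [htop]
  have hmain : ∀ k ∈ Finset.range (l+1),
      ((M+1-k).choose (l+1-k) : ℝ) * (p/(1-p))^(l+1) * (1/p)^k / (k.factorial : ℝ) * poch (-(x-1)) k
        - ((M-k).choose (l-k) : ℝ) * (p/(1-p))^(l+1) * (1/p)^(k+1) / (k.factorial : ℝ) * poch (-(x-1)) k
      = ((M-k).choose (l+1-k) : ℝ) * (p/(1-p))^(l+1) * (1/p)^k / (k.factorial : ℝ) * poch (-(x-1)) k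
        - ((M-k).choose (l-k) : ℝ) * (p/(1-p))^l * (1/p)^k / (k.factorial : ℝ) * poch (-(x-1)) k := by
    intro k hk
    have hkl : k ≤ l := by simpa [Nat.lt_succ_iff] using hk
    have hpas : (M+1-k).choose (l+1-k) = (M-k).choose (l+1-k) + (M-k).choose (l-k) := by
      rw [show M+1-k = (M-k)+1 by omega, show l+1-k = (l-k)+1 by omega, Nat.choose_succ_succ]
      simp only [Nat.succ_eq_add_one]
      omega
    rw [hpas]
    have hfac : ((k.factorial : ℝ)) ≠ 0 := by exact_mod_cast Nat.factorial_ne_zero k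
    push_cast
    simp only [div_pow]
    field_simp
    ring
  calc (∑ k ∈ Finset.range (l+1),
        ((M+1-k).choose (l+1-k) : ℝ) * (p/(1-p))^(l+1) * (1/p)^k / (k.factorial : ℝ) * poch (-(x-1)) k)
        + ((M-(l+1)).choose (l+1-(l+1)) : ℝ) * (p/(1-p))^(l+1) * (1/p)^(l+1) / ((l+1).factorial : ℝ) * poch (-(x-1)) (l+1)
        - ∑ k ∈ Finset.range (l+1),
          ((M-k).choose (l-k) : ℝ) * (p/(1-p))^(l+1) * (1/p)^(k+1) / (k.factorial : ℝ) * poch (-(x-1)) k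
      = (∑ k ∈ Finset.range (l+1),
          (((M+1-k).choose (l+1-k) : ℝ) * (p/(1-p))^(l+1) * (1/p)^k / (k.factorial : ℝ) * poch (-(x-1)) k
            - ((M-k).choose (l-k) : ℝ) * (p/(1-p))^(l+1) * (1/p)^(k+1) / (k.factorial : ℝ) * poch (-(x-1)) k))
        + ((M-(l+1)).choose (l+1-(l+1)) : ℝ) * (p/(1-p))^(l+1) * (1/p)^(l+1) / ((l+1).factorial : ℝ) * poch (-(x-1)) (l+1) := by
        rw [Finset.sum_sub_distrib]; ring
    _ = (∑ k ∈ Finset.range (l+1),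
          (((M-k).choose (l+1-k) : ℝ) * (p/(1-p))^(l+1) * (1/p)^k / (k.factorial : ℝ) * poch (-(x-1)) k
            - ((M-k).choose (l-k) : ℝ) * (p/(1-p))^l * (1/p)^k / (k.factorial : ℝ) * poch (-(x-1)) k))
        + ((M-(l+1)).choose (l+1-(l+1)) : ℝ) * (p/(1-p))^(l+1) * (1/p)^(l+1) / ((l+1).factorial : ℝ) * poch (-(x-1)) (l+1) := by
        rw [Finset.sum_congr rfl hmain]
    _ = _ := by rw [Finset.sum_sub_distrib]; ring

lemma TTR0KT {p : ℝ} (hp : p ≠ 0) (hq : (1:ℝ) - p ≠ 0) (M : ℕ) (y : ℝ) :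
    y * KT 0 y p M = (1-p) * (-(KT 1 y p M) + (M:ℝ)*(p/(1-p)) * KT 0 y p M) := by
  rw [KT_zero, KT_one hp]
  field_simp
  ring

set_option maxHeartbeats 2000000 in
lemma TTRKT {p : ℝ} (hp : p ≠ 0) (hq : (1:ℝ) - p ≠ 0) (l M : ℕ) (hlM : l + 1 ≤ M) (y : ℝ) :
    y * KT (l+1) y p M
      = (1-p) * (-((l:ℝ)+2) * KT (l+2) y p M
        + ((M:ℝ)*(p/(1-p)) - (p/(1-p)-1)*((l:ℝ)+1)) * KT (l+1) y p M
        + (p/(1-p)) * ((l:ℝ) - (M:ℝ)) * KT l y p M) := by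
  have hfac : ∀ k : ℕ, ((k.factorial : ℝ)) ≠ 0 := fun k => by exact_mod_cast Nat.factorial_ne_zero k
  have hMl : ((M:ℝ) - (l:ℝ)) ≠ 0 := by
    have : (l:ℝ) < (M:ℝ) := by exact_mod_cast (by omega : l < M)
    exact sub_ne_zero.mpr (ne_of_lt this).symm
  -- step 1 : expand y * KT(l+1)
  have step1 : y * KT (l+1) y p M
      = (∑ k ∈ Finset.range (l+2),
          (k:ℝ) * (((M-k).choose (l+1-k) : ℝ) * (p/(1-p))^(l+1) * (1/p)^k / (k.factorial : ℝ)) * poch (-y) k)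
        - ∑ k ∈ Finset.range (l+2),
          (((M-k).choose (l+1-k) : ℝ) * (p/(1-p))^(l+1) * (1/p)^k / (k.factorial : ℝ)) * poch (-y) (k+1) := by
    rw [KT, Finset.mul_sum, ← Finset.sum_sub_distrib]
    refine Finset.sum_congr rfl fun k _ => ?_
    have h := poch_mul_y y k
    calc y * (((M-k).choose (l+1-k) : ℝ) * (p/(1-p))^(l+1) * (1/p)^k / (k.factorial : ℝ) * poch (-y) k)
        = (((M-k).choose (l+1-k) : ℝ) * (p/(1-p))^(l+1) * (1/p)^k / (k.factorial : ℝ)) * (y * poch (-y) k) := by ring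
      _ = _ := by rw [h]; ring
  -- step 2 : shift the second sum
  have step2 : (∑ k ∈ Finset.range (l+3), (if k = 0 then 0 else
          (((M-(k-1)).choose (l+1-(k-1)) : ℝ) * (p/(1-p))^(l+1) * (1/p)^(k-1) / ((k-1).factorial : ℝ)) * poch (-y) k))
      = ∑ k ∈ Finset.range (l+2),
        (((M-k).choose (l+1-k) : ℝ) * (p/(1-p))^(l+1) * (1/p)^k / (k.factorial : ℝ)) * poch (-y) (k+1) := by
    rw [Finset.sum_range_succ']
    simp only [Nat.add_sub_cancel, Nat.add_eq_zero, Nat.succ_ne_zero, one_ne_zero, and_false, if_false, if_pos rfl, add_zero]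
    simp
  rw [step1, ← step2]
  -- expand the KT's on the RHS
  rw [show KT (l+2) y p M = ∑ k ∈ Finset.range (l+3),
        (((M-k).choose (l+2-k) : ℝ) * (p/(1-p))^(l+2) * (1/p)^k / (k.factorial : ℝ)) * poch (-y) k from rfl]
  rw [show KT (l+1) y p M = ∑ k ∈ Finset.range (l+2),
        (((M-k).choose (l+1-k) : ℝ) * (p/(1-p))^(l+1) * (1/p)^k / (k.factorial : ℝ)) * poch (-y) k from rfl]
  rw [show KT l y p M = ∑ k ∈ Finset.range (l+1),
        (((M-k).choose (l-k) : ℝ) * (p/(1-p))^l * (1/p)^k / (k.factorial : ℝ)) * poch (-y) k from rfl]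
  -- peel sums down to range (l+1)
  rw [Finset.sum_range_succ (f := fun k =>
      (k:ℝ) * (((M-k).choose (l+1-k) : ℝ) * (p/(1-p))^(l+1) * (1/p)^k / (k.factorial : ℝ)) * poch (-y) k)]
  rw [Finset.sum_range_succ (f := fun k => (if k = 0 then 0 else
      (((M-(k-1)).choose (l+1-(k-1)) : ℝ) * (p/(1-p))^(l+1) * (1/p)^(k-1) / ((k-1).factorial : ℝ)) * poch (-y) k))]
  rw [Finset.sum_range_succ (f := fun k => (if k = 0 then 0 else
      (((M-(k-1)).choose (l+1-(k-1)) : ℝ) * (p/(1-p))^(l+1) * (1/p)^(k-1) / ((k-1).factorial : ℝ)) * poch (-y) k))]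
  rw [Finset.sum_range_succ (f := fun k =>
      (((M-k).choose (l+2-k) : ℝ) * (p/(1-p))^(l+2) * (1/p)^k / (k.factorial : ℝ)) * poch (-y) k)]
  rw [Finset.sum_range_succ (f := fun k =>
      (((M-k).choose (l+2-k) : ℝ) * (p/(1-p))^(l+2) * (1/p)^k / (k.factorial : ℝ)) * poch (-y) k)]
  rw [Finset.sum_range_succ (f := fun k =>
      (((M-k).choose (l+1-k) : ℝ) * (p/(1-p))^(l+1) * (1/p)^k / (k.factorial : ℝ)) * poch (-y) k)]
  simp only [Nat.add_sub_cancel, Nat.sub_self, Nat.choose_zero_right, Nat.choose_one_right,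
    Nat.cast_one, if_neg (Nat.succ_ne_zero l), if_neg (Nat.succ_ne_zero (l+1)),
    show l+2-(l+1) = 1 by omega, show l+1-l = 1 by omega]
  rw [show poch (-y) (l+2) = poch (-y) (l+1) * (-y + (↑(l+1) : ℝ)) from poch_succ _ _]
  rw [show ((l+2).factorial : ℝ) = ((l:ℝ)+2) * ((l+1).factorial : ℝ) by
        rw [show l+2 = (l+1)+1 by omega, Nat.factorial_succ]; push_cast; ring,
     show ((l+1).factorial : ℝ) = ((l:ℝ)+1) * (l.factorial : ℝ) by
        rw [Nat.factorial_succ]; push_cast; ring]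
  push_cast [Nat.cast_sub (show l ≤ M by omega), Nat.cast_sub (show l+1 ≤ M by omega)]
  simp only [Nat.sub_self, Nat.choose_zero_right, Nat.cast_one,
    show ((l+1).factorial:ℝ) = ((l:ℝ)+1)*(l.factorial:ℝ) from by rw [Nat.factorial_succ]; push_cast; ring]
  have hL1 : ((l:ℝ)+1) ≠ 0 := by positivity
  have hL2 : ((l:ℝ)+2) ≠ 0 := by positivity
  have perk : ∀ x ∈ Finset.range (l+1),
      ((x:ℝ) * ((((M - x).choose (l + 1 - x) : ℕ) : ℝ) * (p / (1 - p)) ^ (l + 1) * (1 / p) ^ x / (x.factorial : ℝ)) * poch (-y) x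
        - (if x = 0 then 0 else
            (((M - (x - 1)).choose (l + 1 - (x - 1)) : ℕ) : ℝ) * (p / (1 - p)) ^ (l + 1) * (1 / p) ^ (x - 1) / ((x - 1).factorial : ℝ) * poch (-y) x))
      = (1 - p) * (-((l:ℝ) + 2) * ((((M - x).choose (l + 2 - x) : ℕ) : ℝ) * (p / (1 - p)) ^ (l + 2) * (1 / p) ^ x / (x.factorial : ℝ) * poch (-y) x)
          + ((M:ℝ) * (p / (1 - p)) - (p / (1 - p) - 1) * ((l:ℝ) + 1)) * ((((M - x).choose (l + 1 - x) : ℕ) : ℝ) * (p / (1 - p)) ^ (l + 1) * (1 / p) ^ x / (x.factorial : ℝ) * poch (-y) x)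
          + p / (1 - p) * ((l:ℝ) - (M:ℝ)) * ((((M - x).choose (l - x) : ℕ) : ℝ) * (p / (1 - p)) ^ l * (1 / p) ^ x / (x.factorial : ℝ) * poch (-y) x)) := by
    intro k hk
    have hkl : k ≤ l := by simpa [Nat.lt_succ_iff] using hk
    rcases k with _ | j
    · simp only [if_pos rfl, Nat.cast_zero, zero_mul, Nat.sub_zero, Nat.factorial_zero,
        Nat.cast_one, pow_zero, zero_sub]
      have c2 := Nat.choose_succ_right_eq M (l+1)
      have c3 := Nat.choose_succ_right_eq M l
      have c2R : ((M.choose (l+2)) : ℝ) * ((l:ℝ)+2) = (M.choose (l+1) : ℝ) * ((M:ℝ)-(l:ℝ)-1) := by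
        have h := congrArg (fun t : ℕ => (t : ℝ)) c2
        push_cast [Nat.cast_sub (show l+1 ≤ M by omega)] at h
        push_cast
        linarith [h]
      have c3R : ((M.choose (l+1)) : ℝ) * ((l:ℝ)+1) = (M.choose l : ℝ) * ((M:ℝ)-(l:ℝ)) := by
        have h := congrArg (fun t : ℕ => (t : ℝ)) c3
        push_cast [Nat.cast_sub (show l ≤ M by omega)] at h
        push_cast
        linarith [h]
      have hb : ((M.choose (l+2)) : ℝ) = (M.choose (l+1) : ℝ) * ((M:ℝ)-(l:ℝ)-1) / ((l:ℝ)+2) := by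
        rw [eq_div_iff hL2]; linarith [c2R]
      have hd : ((M.choose l) : ℝ) = (M.choose (l+1) : ℝ) * ((l:ℝ)+1) / ((M:ℝ)-(l:ℝ)) := by
        rw [eq_div_iff hMl]; linarith [c3R]
      rw [hb, hd]
      simp only [div_pow]
      field_simp
      try ring
      try simp
    · have hjl : j + 1 ≤ l := hkl
      simp only [if_neg (Nat.succ_ne_zero j), Nat.add_sub_cancel]
      rw [show l + 1 - (j+1) = l - j by omega, show l + 2 - (j+1) = (l-j)+1 by omega,
          show l - (j+1) = l - j - 1 by omega, show M - (j+1) = M - j - 1 by omega,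
          show l + 1 - j = (l-j)+1 by omega]
      have pas : (M-j).choose ((l-j)+1) = (M-j-1).choose (l-j) + (M-j-1).choose ((l-j)+1) := by
        rw [show M-j = (M-j-1)+1 by omega, Nat.choose_succ_succ]
        simp [Nat.succ_eq_add_one]
      have ab1 := Nat.choose_succ_right_eq (M-j-1) (l-j)
      have ab2 := Nat.choose_succ_right_eq (M-j-1) (l-j-1)
      rw [show M-j-1-(l-j) = M-(l+1) by omega] at ab1
      rw [show (l-j-1)+1 = l-j by omega, show M-j-1-(l-j-1) = M-l by omega] at ab2
      have ab1R : ((M-j-1).choose ((l-j)+1) : ℝ) * ((l:ℝ)-(j:ℝ)+1) = ((M-j-1).choose (l-j) : ℝ) * ((M:ℝ)-(l:ℝ)-1) := by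
        have h := congrArg (fun t : ℕ => (t : ℝ)) ab1
        push_cast [Nat.cast_sub (show l+1 ≤ M by omega), Nat.cast_sub (show j ≤ l by omega)] at h
        linarith [h]
      have ab2R : ((M-j-1).choose (l-j) : ℝ) * ((l:ℝ)-(j:ℝ)) = ((M-j-1).choose (l-j-1) : ℝ) * ((M:ℝ)-(l:ℝ)) := by
        have h := congrArg (fun t : ℕ => (t : ℝ)) ab2
        push_cast [Nat.cast_sub (show l ≤ M by omega), Nat.cast_sub (show j ≤ l by omega)] at h
        linarith [h]
      have hlj : ((l:ℝ)-(j:ℝ)+1) ≠ 0 := by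
        have : (j:ℝ) ≤ (l:ℝ) := by exact_mod_cast (show j ≤ l by omega)
        exact ne_of_gt (by linarith)
      have hbR : ((M-j-1).choose ((l-j)+1) : ℝ) = ((M-j-1).choose (l-j) : ℝ) * ((M:ℝ)-(l:ℝ)-1) / ((l:ℝ)-(j:ℝ)+1) := by
        rw [eq_div_iff hlj]; linarith [ab1R]
      have hdR : ((M-j-1).choose (l-j-1) : ℝ) = ((M-j-1).choose (l-j) : ℝ) * ((l:ℝ)-(j:ℝ)) / ((M:ℝ)-(l:ℝ)) := by
        rw [eq_div_iff hMl]; linarith [ab2R]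
      have heR : ((M-j).choose ((l-j)+1) : ℝ) = ((M-j-1).choose (l-j) : ℝ) + ((M-j-1).choose ((l-j)+1) : ℝ) := by
        exact_mod_cast congrArg (fun t : ℕ => (t : ℝ)) pas
      rw [heR, hbR, hdR]
      rw [show ((j+1).factorial : ℝ) = ((j:ℝ)+1) * (j.factorial : ℝ) from by rw [Nat.factorial_succ]; push_cast; ring]
      have hj1 : ((j:ℝ)+1) ≠ 0 := by positivity
      push_cast
      simp only [div_pow]
      field_simp
      ring
  have key := Finset.sum_congr rfl perk
  have expand : (1 - p) * (-((l:ℝ) + 2) * (∑ x ∈ Finset.range (l+1), (((M - x).choose (l + 2 - x) : ℕ) : ℝ) * (p / (1 - p)) ^ (l + 2) * (1 / p) ^ x / (x.factorial : ℝ) * poch (-y) x)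
          + ((M:ℝ) * (p / (1 - p)) - (p / (1 - p) - 1) * ((l:ℝ) + 1)) * (∑ x ∈ Finset.range (l+1), (((M - x).choose (l + 1 - x) : ℕ) : ℝ) * (p / (1 - p)) ^ (l + 1) * (1 / p) ^ x / (x.factorial : ℝ) * poch (-y) x)
          + p / (1 - p) * ((l:ℝ) - (M:ℝ)) * (∑ x ∈ Finset.range (l+1), (((M - x).choose (l - x) : ℕ) : ℝ) * (p / (1 - p)) ^ l * (1 / p) ^ x / (x.factorial : ℝ) * poch (-y) x))
      = ∑ x ∈ Finset.range (l+1), (1 - p) * (-((l:ℝ) + 2) * ((((M - x).choose (l + 2 - x) : ℕ) : ℝ) * (p / (1 - p)) ^ (l + 2) * (1 / p) ^ x / (x.factorial : ℝ) * poch (-y) x)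
          + ((M:ℝ) * (p / (1 - p)) - (p / (1 - p) - 1) * ((l:ℝ) + 1)) * ((((M - x).choose (l + 1 - x) : ℕ) : ℝ) * (p / (1 - p)) ^ (l + 1) * (1 / p) ^ x / (x.factorial : ℝ) * poch (-y) x)
          + p / (1 - p) * ((l:ℝ) - (M:ℝ)) * ((((M - x).choose (l - x) : ℕ) : ℝ) * (p / (1 - p)) ^ l * (1 / p) ^ x / (x.factorial : ℝ) * poch (-y) x)) := by
    rw [Finset.mul_sum, Finset.mul_sum, Finset.mul_sum, ← Finset.sum_add_distrib, ← Finset.sum_add_distrib, Finset.mul_sum]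
  have key2 : (∑ x ∈ Finset.range (l+1),
        (x:ℝ) * ((((M - x).choose (l + 1 - x) : ℕ) : ℝ) * (p / (1 - p)) ^ (l + 1) * (1 / p) ^ x / (x.factorial : ℝ)) * poch (-y) x)
      - (∑ x ∈ Finset.range (l+1), (if x = 0 then 0 else
          (((M - (x - 1)).choose (l + 1 - (x - 1)) : ℕ) : ℝ) * (p / (1 - p)) ^ (l + 1) * (1 / p) ^ (x - 1) / ((x - 1).factorial : ℝ) * poch (-y) x))
      = (1 - p) * (-((l:ℝ) + 2) * (∑ x ∈ Finset.range (l+1), (((M - x).choose (l + 2 - x) : ℕ) : ℝ) * (p / (1 - p)) ^ (l + 2) * (1 / p) ^ x / (x.factorial : ℝ) * poch (-y) x)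
          + ((M:ℝ) * (p / (1 - p)) - (p / (1 - p) - 1) * ((l:ℝ) + 1)) * (∑ x ∈ Finset.range (l+1), (((M - x).choose (l + 1 - x) : ℕ) : ℝ) * (p / (1 - p)) ^ (l + 1) * (1 / p) ^ x / (x.factorial : ℝ) * poch (-y) x)
          + p / (1 - p) * ((l:ℝ) - (M:ℝ)) * (∑ x ∈ Finset.range (l+1), (((M - x).choose (l - x) : ℕ) : ℝ) * (p / (1 - p)) ^ l * (1 / p) ^ x / (x.factorial : ℝ) * poch (-y) x)) := by
    rw [← Finset.sum_sub_distrib, key, expand]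
  generalize (∑ x ∈ Finset.range (l+1), (((M - x).choose (l + 2 - x) : ℕ) : ℝ) * (p / (1 - p)) ^ (l + 2) * (1 / p) ^ x / (x.factorial : ℝ) * poch (-y) x) = S1 at key2 ⊢
  generalize (∑ x ∈ Finset.range (l+1), (((M - x).choose (l + 1 - x) : ℕ) : ℝ) * (p / (1 - p)) ^ (l + 1) * (1 / p) ^ x / (x.factorial : ℝ) * poch (-y) x) = S2 at key2 ⊢
  generalize (∑ x ∈ Finset.range (l+1), (((M - x).choose (l - x) : ℕ) : ℝ) * (p / (1 - p)) ^ l * (1 / p) ^ x / (x.factorial : ℝ) * poch (-y) x) = S3 at key2 ⊢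
  generalize (∑ x ∈ Finset.range (l+1), (x:ℝ) * ((((M - x).choose (l + 1 - x) : ℕ) : ℝ) * (p / (1 - p)) ^ (l + 1) * (1 / p) ^ x / (x.factorial : ℝ)) * poch (-y) x) = S4 at key2 ⊢
  generalize (∑ x ∈ Finset.range (l+1), (if x = 0 then 0 else (((M - (x - 1)).choose (l + 1 - (x - 1)) : ℕ) : ℝ) * (p / (1 - p)) ^ (l + 1) * (1 / p) ^ (x - 1) / ((x - 1).factorial : ℝ) * poch (-y) x)) = S5 at key2 ⊢
  linear_combination (norm := (simp only [div_pow]; field_simp; ring)) key2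


lemma linkKT {p : ℝ} (hp : p ≠ 0) (hq : (1:ℝ) - p ≠ 0) (l M : ℕ) (hlM : l ≤ M) (x : ℝ) :
    KT (l+1) x p M + (p/(1-p)) * KT l x p M = KT (l+1) (x-1) p M - KT l (x-1) p M := by
  rw [← BKT l M hlM x]
  exact DKT hp hq l M hlM x

lemma starKT {p : ℝ} (hp : p ≠ 0) (hq : (1:ℝ) - p ≠ 0) (n M : ℕ) (hn1 : n + 1 ≤ M) (x : ℝ) :
    (2*((n:ℝ)+1) - x) * KT (n+1) x p M
      + (p/(1-p)) * (2*((n:ℝ)+1) - 2*((M:ℝ)+1) + x) * KT n x p M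
      + x * KT (n+1) (x-1) p M + x * KT n (x-1) p M = 0 := by
  rcases n with _ | j
  · rw [KT_zero, KT_zero, KT_one hp, KT_one hp]
    push_cast
    field_simp
    ring
  · have h1 : j + 2 ≤ M := hn1
    have hT1 := TTRKT hp hq (j+1) M (by omega) x
    have hT2 := TTRKT hp hq j M (by omega) x
    have hT3 := TTRKT hp hq (j+1) M (by omega) (x-1)
    have hT4 := TTRKT hp hq j M (by omega) (x-1)
    have hL1 := linkKT hp hq j M (by omega) x
    have hL2 := linkKT hp hq (j+1) M (by omega) x
    have hL3 := linkKT hp hq (j+2) M (by omega) x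
    push_cast at hT1 hT2 hT3 hT4 ⊢
    linear_combination (norm := (field_simp; ring)) (-1) * hT1 + (p/(1-p)) * hT2 + hT3 + hT4
      + p*((j:ℝ)-(M:ℝ)) * hL1 + (((j:ℝ)+2) - p*((M:ℝ)+1)) * hL2 + (1-p)*((j:ℝ)+3) * hL3

theorem krawtchouk_identity_d (N : ℕ) (hN : 1 ≤ N) (p : ℝ) (hp : p ∈ Set.Ioo (0 : ℝ) 1)
    (n : ℕ) (hn : n ≤ N - 1) (x : ℝ) (hx : x ∈ Set.Icc (0 : ℝ) N) :
    (∑ l ∈ Finset.Icc 1 n, (2 * (l : ℝ) / N - 1) * ktil l x p N ^ 2) +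
        ((1 - p) - p) / (1 - p) ^ 2 * (1 - x / N) *
          (∑ l ∈ Finset.range n, ktil l x p (N - 1) ^ 2) +
        (1 - x / N) * ktil n x p (N - 1) ^ 2 =
      1 - x / N * ktil n (x - 1) p (N - 1) ^ 2 := by
  obtain ⟨hp0, hp1⟩ := hp
  have hpne : p ≠ 0 := ne_of_gt hp0
  have hqne : (1:ℝ) - p ≠ 0 := ne_of_gt (by linarith)
  have hNpos : (0:ℝ) < (N:ℝ) := by exact_mod_cast Nat.lt_of_lt_of_le Nat.zero_lt_one hN
  have hNne : ((N:ℝ)) ≠ 0 := ne_of_gt hNpos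
  have hone : ∀ (y : ℝ) (K : ℕ), ktil 0 y p K = 1 := by
    intro y K; simp [ktil, kraw, poch]
  have hNM : N - 1 + 1 = N := by omega
  revert hn
  induction n with
  | zero =>
    intro hn
    rw [show Finset.Icc 1 0 = (∅ : Finset ℕ) from Finset.Icc_eq_empty (by omega)]
    simp only [Finset.sum_empty, Finset.range_zero]
    rw [hone, hone]
    ring
  | succ n ih =>
    intro hn
    have ih' := ih (by omega)
    have e1 : ktil (n+1) x p N = KT (n+1) x p (N-1+1) := by
      rw [hNM]; exact ktil_eq_KT hpne hqne (by omega) x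
    have hB : ktil (n+1) x p N = ktil (n+1) x p (N-1) + (p/(1-p)) * ktil n x p (N-1) := by
      rw [e1, ktil_eq_KT hpne hqne (show n+1 ≤ N-1 by omega) x,
        ktil_eq_KT hpne hqne (show n ≤ N-1 by omega) x]
      exact BKT n (N-1) (by omega) x
    have hD : ktil (n+1) x p N = ktil (n+1) (x-1) p (N-1) - ktil n (x-1) p (N-1) := by
      rw [e1, ktil_eq_KT hpne hqne (show n+1 ≤ N-1 by omega) (x-1),
        ktil_eq_KT hpne hqne (show n ≤ N-1 by omega) (x-1)]
      exact DKT hpne hqne n (N-1) (by omega) x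
    have hstar := starKT hpne hqne n (N-1) (by omega) x
    rw [← ktil_eq_KT hpne hqne (show n+1 ≤ N-1 by omega) x,
        ← ktil_eq_KT hpne hqne (show n ≤ N-1 by omega) x,
        ← ktil_eq_KT hpne hqne (show n+1 ≤ N-1 by omega) (x-1),
        ← ktil_eq_KT hpne hqne (show n ≤ N-1 by omega) (x-1)] at hstar
    have hcast : ((N-1:ℕ):ℝ) = (N:ℝ) - 1 := by
      push_cast [Nat.cast_sub hN]; ring
    rw [hcast] at hstar
    rw [Finset.sum_Icc_succ_top (by omega : 1 ≤ n+1), Finset.sum_range_succ]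
    push_cast
    linear_combination (norm := (field_simp; ring)) ih' + (ktil (n+1) x p N)/(N:ℝ) * hstar
      + (((2*((n:ℝ)+1) - (N:ℝ))*(ktil (n+1) x p N)
          - ((N:ℝ) - x)*(ktil (n+1) x p (N-1) - (p/(1-p))*ktil n x p (N-1)))/(N:ℝ)) * hB
      + (-(x*(ktil (n+1) (x-1) p (N-1) + ktil n (x-1) p (N-1)))/(N:ℝ)) * hD
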